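/- Let u = diag(λ₀, …, λ_{n−1}) be a unitary diagonal matrix that is optimal (in the lexicographic sense defined below), and let σ be a permutation of {0,…,n−2} such that i ↦ |λ_{σ(i)} − λ_{σ(i)+1}| is non-increasing. Then with λ := λ_{n−1}, for all i = 0, …, n−2: μ_i(λ − u) ≤ |λ_{σ(i)} − λ_{σ(i)+1}|, where μ_i denotes the (i+1)-st largest singular value. -/

import Mathlib

/-- Let `u = diag(λ₀, …, λₙ)` be an optimal diagonal unitary (the sequence
of consecutive eigenvalue gaps is lexicographically maximal among all diagonal matrices in
the conjugacy class, i.e. among all permutations of the eigenvalues), and let `σ` be a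
permutation of `{0,…,n-1}` making the gaps non-increasing. Then with `λ := λₙ`, for all
`i`, `μ_i(λ - u) ≤ |λ_{σ(i)} - λ_{σ(i)+1}|`, where `μ_i(λ - u)` is the `(i+1)`-st largest
of the values `|λₙ - λⱼ|`; this is encoded by saying that at most `i` of the values
`‖λₙ - λⱼ‖` strictly exceed the gap at `σ(i)`. -/
theorem optimal_diagonal_unitary_singular_value_bound
    (n : ℕ) (hn : 1 ≤ n) (lam : Fin (n + 1) → ℂ) (hunit : ∀ j, ‖lam j‖ = 1)
    (hopt : ∀ π : Equiv.Perm (Fin (n + 1)), ∀ k : Fin n,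
      (∀ j : Fin n, j < k →
        ‖lam (π j.castSucc) - lam (π j.succ)‖ = ‖lam j.castSucc - lam j.succ‖) →
      ‖lam (π k.castSucc) - lam (π k.succ)‖ ≤ ‖lam k.castSucc - lam k.succ‖)
    (σ : Equiv.Perm (Fin n))
    (hmono : ∀ a b : Fin n, a ≤ b →
      ‖lam (σ b).castSucc - lam (σ b).succ‖ ≤ ‖lam (σ a).castSucc - lam (σ a).succ‖)
    (i : Fin n) :
    (Finset.univ.filter fun j : Fin (n + 1) =>
        ‖lam (σ i).castSucc - lam (σ i).succ‖ < ‖lam (Fin.last n) - lam j‖).card ≤ i := by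
  classical
  have key : ∀ k : Fin n, ‖lam (Fin.last n) - lam k.castSucc‖ ≤
      ‖lam k.castSucc - lam k.succ‖ := by
    intro k
    rw [norm_sub_rev]
    by_cases h : k.succ = Fin.last n
    · rw [h]
    · have hk1 : k.castSucc ≠ k.succ := (Fin.castSucc_lt_succ : k.castSucc < k.succ).ne
      have hk2 : k.castSucc ≠ Fin.last n := by
        intro h
        have h' := congrArg Fin.val h
        simp only [Fin.coe_castSucc, Fin.val_last] at h'
        exact absurd h' (Nat.ne_of_lt k.isLt)
      have := hopt (Equiv.swap k.succ (Fin.last n)) k ?_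
      · rwa [Equiv.swap_apply_of_ne_of_ne hk1 hk2, Equiv.swap_apply_left] at this
      · intro j hj
        have hjk : (j : ℕ) < (k : ℕ) := hj
        have h1 : j.castSucc ≠ k.succ := by
          intro h
          have h' := congrArg Fin.val h
          simp only [Fin.coe_castSucc, Fin.val_succ] at h'
          omega
        have h2 : j.castSucc ≠ Fin.last n := by
          intro h
          have h' := congrArg Fin.val h
          simp only [Fin.coe_castSucc, Fin.val_last] at h'
          exact absurd h' (Nat.ne_of_lt j.isLt)
        have h3 : j.succ ≠ k.succ := by
          intro h
          have h' := congrArg Fin.val h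
          simp only [Fin.val_succ] at h'
          omega
        have h4 : j.succ ≠ Fin.last n := by
          intro h
          have h' := congrArg Fin.val h
          simp only [Fin.val_succ, Fin.val_last] at h'
          have := k.isLt; omega
        rw [Equiv.swap_apply_of_ne_of_ne h1 h2, Equiv.swap_apply_of_ne_of_ne h3 h4]
  have hsub : (Finset.univ.filter fun j : Fin (n + 1) =>
        ‖lam (σ i).castSucc - lam (σ i).succ‖ < ‖lam (Fin.last n) - lam j‖) ⊆
      Finset.image (fun m : Fin n => (σ m).castSucc) (Finset.Iio i) := by
    intro j hj
    simp only [Finset.mem_filter, Finset.mem_univ, true_and] at hj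
    have hjne : j ≠ Fin.last n := by
      intro h
      rw [h, sub_self, norm_zero] at hj
      exact absurd hj (not_lt.2 (norm_nonneg _))
    set k : Fin n := j.castPred hjne with hk
    have hkc : k.castSucc = j := Fin.castSucc_castPred j hjne
    have hgap : ‖lam (σ i).castSucc - lam (σ i).succ‖ <
        ‖lam k.castSucc - lam k.succ‖ := by
      refine lt_of_lt_of_le ?_ (key k)
      rw [hkc]; exact hj
    have hlt : σ.symm k < i := by
      by_contra hge
      have : i ≤ σ.symm k := not_lt.1 hge
      have := hmono i (σ.symm k) this
      rw [Equiv.apply_symm_apply] at this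
      exact absurd hgap (not_lt.2 this)
    refine Finset.mem_image.2 ⟨σ.symm k, Finset.mem_Iio.2 hlt, ?_⟩
    rw [Equiv.apply_symm_apply, hkc]
  calc (Finset.univ.filter fun j : Fin (n + 1) =>
        ‖lam (σ i).castSucc - lam (σ i).succ‖ < ‖lam (Fin.last n) - lam j‖).card
      ≤ (Finset.image (fun m : Fin n => (σ m).castSucc) (Finset.Iio i)).card :=
        Finset.card_le_card hsub
    _ ≤ (Finset.Iio i).card := Finset.card_image_le
    _ = i := by rw [Fin.card_Iio]
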